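/- Fix α > 0 and ρ ∈ (−1,1), and parameters s > 0, c ∈ [0,1), ω ≥ 0, ζ ≥ 0, η ≥ 0; set a = s(1−c) + ω², H = η²/(s(1−c)), W = ω²/(s(1−c)). For each integer k ≥ 1 with 1/k < α set ν = 1/k, S₀ = 2α/(a(α + ν + |α − ν|)), γ₀ = a²νS₀²/α, I⁰ = s(1−c)(1 − 2s(1−c)νS₀ + a s(1−c) ν S₀²), I¹ = (s(1−c)(1−ν) + ω²)/ν, and E_k = (1/k)·((1−ρ²)I⁰ + ρ²I¹ + γ₀ζ² + η²)/(1 − γ₀) + ((k−1)/k)·((1−ρ²)s(1−c)(1 − 2s(1−c)νS₀) − ρ²s(1−c)). Then as k → ∞: (i) E_k → E_∞ := s(1−c)·(1 − ρ² + ρ²W), and (ii) k·(E_k − E_∞) → s(1−c)·((1+W)²ρ² + α(H + HW − 2 + 2ρ²))/((1+W)·α). -/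

import Mathlib

/-- Ridgeless generalization error of a homogeneous ensemble of `k` linear regressors on
equicorrelated data, each subsampling a mutually exclusive fraction `ν = 1/k` of the
features (total number of weights conserved). -/
noncomputable def homEnsErr (k : ℕ) (α ρ s c ω ζ η : ℝ) : ℝ :=
  let ν : ℝ := 1 / (k : ℝ)
  let a : ℝ := s * (1 - c) + ω ^ 2
  let S0 : ℝ := 2 * α / (a * (α + ν + |α - ν|))
  let γ0 : ℝ := a ^ 2 * ν * S0 ^ 2 / α
  let I0 : ℝ := s * (1 - c) * (1 - 2 * s * (1 - c) * ν * S0 + a * s * (1 - c) * ν * S0 ^ 2)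
  let I1 : ℝ := (s * (1 - c) * (1 - ν) + ω ^ 2) / ν
  (1 / (k : ℝ)) * (((1 - ρ ^ 2) * I0 + ρ ^ 2 * I1 + γ0 * ζ ^ 2 + η ^ 2) / (1 - γ0)) +
    (((k : ℝ) - 1) / (k : ℝ)) *
      ((1 - ρ ^ 2) * s * (1 - c) * (1 - 2 * s * (1 - c) * ν * S0) - ρ ^ 2 * s * (1 - c))



/-- auxiliary rational function: `E_k = E_∞ + ν g(ν)` for `ν = 1/k < α`. -/
noncomputable def gAux (α ρ s c ω ζ η ν : ℝ) : ℝ :=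
  ((α * ((1 - 2 * ρ ^ 2) * (s * (1 - c)) + η ^ 2) + ρ ^ 2 * (s * (1 - c) + ω ^ 2))
      + (α * (ζ ^ 2 / α - (1 - ρ ^ 2) * (s * (1 - c)) ^ 2 / (s * (1 - c) + ω ^ 2))) * ν)
    / (α - ν)
  + (2 * (1 - ρ ^ 2) * (s * (1 - c)) ^ 2 / (s * (1 - c) + ω ^ 2)) * ν
  + (-(2 * (1 - ρ ^ 2) * (s * (1 - c)) ^ 2 / (s * (1 - c) + ω ^ 2)) - s * (1 - c)
      + 2 * ρ ^ 2 * (s * (1 - c)))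

set_option maxHeartbeats 1000000 in
lemma key (α ρ s c ω ζ η : ℝ) (hα : 0 < α) (hs : 0 < s) (hc : c ∈ Set.Ico (0 : ℝ) 1)
    (k : ℕ) (hk : 1 ≤ k) (hkα : 1 / (k : ℝ) < α) :
    homEnsErr k α ρ s c ω ζ η
      = s * (1 - c) * (1 - ρ ^ 2 + ρ ^ 2 * (ω ^ 2 / (s * (1 - c))))
        + (1 / (k : ℝ)) * gAux α ρ s c ω ζ η (1 / (k : ℝ)) := by
  have hb : 0 < s * (1 - c) := by nlinarith [hc.2]
  have ha : 0 < s * (1 - c) + ω ^ 2 := by positivity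
  have hk0 : (k : ℝ) ≠ 0 := by positivity
  have hν : 0 < 1 / (k : ℝ) := by positivity
  have habs : |α - 1 / (k : ℝ)| = α - 1 / (k : ℝ) := abs_of_pos (by linarith)
  have hαν : α - 1 / (k : ℝ) ≠ 0 := by linarith
  simp only [homEnsErr, gAux, habs]
  have hS0 : 2 * α / ((s * (1 - c) + ω ^ 2) * (α + 1 / (k : ℝ) + (α - 1 / (k : ℝ))))
      = 1 / (s * (1 - c) + ω ^ 2) := by
    rw [show α + 1 / (k : ℝ) + (α - 1 / (k : ℝ)) = 2 * α by ring]
    field_simp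
  rw [hS0]
  have hden : (1 : ℝ) - (s * (1 - c) + ω ^ 2) ^ 2 * (1 / (k : ℝ))
      * (1 / (s * (1 - c) + ω ^ 2)) ^ 2 / α = (α - 1 / (k : ℝ)) / α := by
    field_simp
  rw [hden, show ((k:ℝ)-1)/(k:ℝ) = 1 - 1/(k:ℝ) by field_simp]
  generalize 1 / (k:ℝ) = ν at hν hαν ⊢
  have hb' := hb.ne'
  have ha' := ha.ne'
  have hν' := hν.ne'
  have hα' := hα.ne'
  have h1c : (1:ℝ) - c ≠ 0 := (by linarith [hc.2] : (0:ℝ) < 1 - c).ne'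
  have hs' := hs.ne'
  field_simp
  ring

/-- Large-ensemble asymptotics of the ridgeless homogeneous-ensemble error: as `k → ∞`,
`E_k → E_∞ = s(1−c)(1 − ρ² + ρ²W)` and
`k(E_k − E_∞) → s(1−c)((1+W)²ρ² + α(H + HW − 2 + 2ρ²))/((1+W)α)`,
with `H = η²/(s(1−c))` and `W = ω²/(s(1−c))`. -/
theorem stmt_18 (α ρ s c ω ζ η : ℝ) (hα : 0 < α) (hρ : ρ ∈ Set.Ioo (-1 : ℝ) 1)
    (hs : 0 < s) (hc : c ∈ Set.Ico (0 : ℝ) 1) (hω : 0 ≤ ω) (hζ : 0 ≤ ζ) (hη : 0 ≤ η) :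
    let H := η ^ 2 / (s * (1 - c))
    let W := ω ^ 2 / (s * (1 - c))
    let Einf := s * (1 - c) * (1 - ρ ^ 2 + ρ ^ 2 * W)
    Filter.Tendsto (fun k : ℕ => homEnsErr k α ρ s c ω ζ η) Filter.atTop (nhds Einf) ∧
    Filter.Tendsto (fun k : ℕ => (k : ℝ) * (homEnsErr k α ρ s c ω ζ η - Einf))
      Filter.atTop
      (nhds (s * (1 - c) *
        ((1 + W) ^ 2 * ρ ^ 2 + α * (H + H * W - 2 + 2 * ρ ^ 2)) / ((1 + W) * α))) := by
  simp only []
  have hb : 0 < s * (1 - c) := by nlinarith [hc.2]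
  have ha : 0 < s * (1 - c) + ω ^ 2 := by positivity
  set Einf := s * (1 - c) * (1 - ρ ^ 2 + ρ ^ 2 * (ω ^ 2 / (s * (1 - c)))) with hE
  -- continuity of gAux at 0
  have hcont : ContinuousAt (gAux α ρ s c ω ζ η) 0 := by
    unfold gAux
    have h1 : ContinuousAt (fun ν : ℝ => α - ν) 0 := continuousAt_const.sub continuousAt_id
    have h2 : (fun ν : ℝ => α - ν) 0 ≠ 0 := by simpa using hα.ne'
    exact (((continuousAt_const.add (continuousAt_const.mul continuousAt_id)).div h1 h2).add
      (continuousAt_const.mul continuousAt_id)).add continuousAt_const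
  have hsmall : Filter.Tendsto (fun k : ℕ => 1 / (k : ℝ)) Filter.atTop (nhds 0) :=
    tendsto_one_div_atTop_nhds_zero_nat
  have htend : Filter.Tendsto (fun k : ℕ => gAux α ρ s c ω ζ η (1 / (k : ℝ)))
      Filter.atTop (nhds (gAux α ρ s c ω ζ η 0)) := hcont.tendsto.comp hsmall
  -- value of gAux at 0
  have hg0 : gAux α ρ s c ω ζ η 0 = s * (1 - c) *
      ((1 + ω ^ 2 / (s * (1 - c))) ^ 2 * ρ ^ 2 +
        α * (η ^ 2 / (s * (1 - c)) + (η ^ 2 / (s * (1 - c))) * (ω ^ 2 / (s * (1 - c))) - 2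
          + 2 * ρ ^ 2)) / ((1 + ω ^ 2 / (s * (1 - c))) * α) := by
    unfold gAux
    have h1c : (1:ℝ) - c ≠ 0 := (by linarith [hc.2] : (0:ℝ) < 1 - c).ne'
    have hs' := hs.ne'
    have hα' := hα.ne'
    have ha' := ha.ne'
    field_simp
    ring
  -- eventual equality
  have hev : ∀ᶠ k : ℕ in Filter.atTop,
      homEnsErr k α ρ s c ω ζ η = Einf + (1 / (k : ℝ)) * gAux α ρ s c ω ζ η (1 / (k : ℝ)) := by
    filter_upwards [hsmall.eventually (eventually_lt_nhds hα), Filter.eventually_ge_atTop 1]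
      with k hk1 hk2
    exact key α ρ s c ω ζ η hα hs hc k hk2 hk1
  constructor
  · refine Filter.Tendsto.congr' (hev.mono fun k hk => hk.symm) ?_
    have : Filter.Tendsto (fun k : ℕ => Einf + (1 / (k : ℝ)) * gAux α ρ s c ω ζ η (1 / (k : ℝ)))
        Filter.atTop (nhds (Einf + 0 * gAux α ρ s c ω ζ η 0)) :=
      tendsto_const_nhds.add (hsmall.mul htend)
    simpa using this
  · rw [← hg0]
    refine Filter.Tendsto.congr' ?_ htend
    filter_upwards [hev, Filter.eventually_ge_atTop 1] with k hk hk1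
    have hk0 : (k : ℝ) ≠ 0 := by positivity
    rw [hk]
    field_simp
    ring
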